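/- For any b ∈ ℂ^{2N+1}, the Hamiltonian satisfies the upper bound H(b) ≤ (3/4) M(b)^2, with equality attained at the 2-mode configuration b_0 = √(m)/√2, b_1 = −√(m)/√2 rescaled appropriately, i.e., the bound is sharp. -/

import Mathlib

open Finset

private lemma key_ineq (n : ℕ) : ∀ a : ℕ → ℝ, (∀ i, 0 ≤ a i) →
    (1/2) * ∑ i ∈ range n, (a i)^2
      + 2 * ∑ i ∈ range (n - 1), a i * a (i+1)
    ≤ (3/4) * (∑ i ∈ range n, a i)^2 := by
  induction n using Nat.strong_induction_on with
  | _ n IH =>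
  match n with
  | 0 => intro a ha; simp
  | 1 => intro a ha; simp; nlinarith [sq_nonneg (a 0)]
  | (m+2) =>
    intro a ha
    have hx := ha 0
    have hy := ha 1
    have hQ : ∑ i ∈ range (m+2), (a i)^2
        = (∑ i ∈ range (m+1), (a (i+1))^2) + (a 0)^2 :=
      Finset.sum_range_succ' (fun i => (a i)^2) (m+1)
    have hS : ∑ i ∈ range (m+2), a i
        = (∑ i ∈ range (m+1), a (i+1)) + a 0 :=
      Finset.sum_range_succ' a (m+1)
    have hX : ∑ i ∈ range (m+2-1), a i * a (i+1)
        = (∑ i ∈ range m, a (i+1) * a (i+2)) + a 0 * a 1 :=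
      Finset.sum_range_succ' (fun i => a i * a (i+1)) m
    have IH1 := IH (m+1) (by omega) (fun i => a (i+1)) (fun i => ha _)
    simp only [Nat.add_sub_cancel] at IH1
    have hSb : ∑ i ∈ range (m+1), a (i+1)
        = (∑ i ∈ range m, a (i+2)) + a 1 :=
      Finset.sum_range_succ' (fun i => a (i+1)) m
    have hSc : 0 ≤ ∑ i ∈ range m, a (i+2) :=
      Finset.sum_nonneg fun i _ => ha _
    rw [hQ, hS, hX]
    by_cases hcase : a 1 ≤ 3 * ∑ i ∈ range m, a (i+2)
    · nlinarith [mul_nonneg hx (by linarith : (0:ℝ) ≤ 3 * (∑ i ∈ range m, a (i+2)) - a 1),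
        sq_nonneg (a 0)]
    · push_neg at hcase
      match m with
      | 0 =>
        norm_num [Finset.sum_range_one] at *
        nlinarith [sq_nonneg (a 0 - a 1)]
      | (k+1) =>
        have hz := ha 2
        have hQb : ∑ i ∈ range (k+2), (a (i+1))^2
            = (∑ i ∈ range (k+1), (a (i+2))^2) + (a 1)^2 :=
          Finset.sum_range_succ' (fun i => (a (i+1))^2) (k+1)
        have hXb : ∑ i ∈ range (k+1), a (i+1) * a (i+2)
            = (∑ i ∈ range k, a (i+2) * a (i+3)) + a 1 * a 2 :=
          Finset.sum_range_succ' (fun i => a (i+1) * a (i+2)) k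
        have IH2 := IH (k+1) (by omega) (fun i => a (i+2)) (fun i => ha _)
        simp only [Nat.add_sub_cancel] at IH2
        have hzSc : a 2 ≤ ∑ i ∈ range (k+1), a (i+2) :=
          Finset.single_le_sum (f := fun i => a (i+2)) (fun i _ => ha _)
            (by simp : 0 ∈ range (k+1))
        set Sc := ∑ i ∈ range (k+1), a (i+2) with hScdef
        nlinarith [IH2, sq_nonneg (a 0 - a 1 + 2*Sc), mul_nonneg hSc hx,
          mul_nonneg hSc (by linarith : (0:ℝ) ≤ a 1 - 2*Sc),
          mul_nonneg hy (by linarith : (0:ℝ) ≤ Sc - a 2)]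

private lemma reindex_sum (N : ℕ) (f : ℤ → ℝ) :
    ∑ j ∈ Finset.Icc (-(N : ℤ)) (N : ℤ), f j
      = ∑ i ∈ range (2*N+1), f ((N : ℤ) - i) := by
  apply Finset.sum_nbij' (i := fun j => ((N : ℤ) - j).toNat) (j := fun i => (N : ℤ) - i)
  · intro a ha; simp only [mem_Icc] at ha; simp only [mem_range]; omega
  · intro a ha; simp only [mem_range] at ha; simp only [mem_Icc]; omega
  · intro a ha; simp only [mem_Icc] at ha; omega
  · intro a ha; simp only [mem_range] at ha; omega
  · intro a ha; simp only [mem_Icc] at ha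
    congr 1; omega

/-- The toy-model Hamiltonian. -/
noncomputable def toyH (N : ℕ) (b : ℤ → ℂ) : ℝ :=
  ∑ j ∈ Finset.Icc (-(N : ℤ)) (N : ℤ),
    ((1 / 2) * ‖b j‖ ^ 4
      - 2 * ((((starRingEnd ℂ) (b j)) ^ 2 * (b (j - 1)) ^ 2).re))

/-- The mass `M(b) = Σ_{j=-N}^N |b_j|²`. -/
noncomputable def toyM (N : ℕ) (b : ℤ → ℂ) : ℝ :=
  ∑ j ∈ Finset.Icc (-(N : ℤ)) (N : ℤ), ‖b j‖ ^ 2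

/-- Sharp upper bound: `H(b) ≤ (3/4) M(b)²`, with equality attained at a mass-one
two-mode configuration. -/
theorem toyH_upper_bound (N : ℕ) (hN : 1 ≤ N) :
    (∀ b : ℤ → ℂ, (∀ j : ℤ, j ∉ Finset.Icc (-(N : ℤ)) (N : ℤ) → b j = 0) →
      toyH N b ≤ (3 / 4) * (toyM N b) ^ 2) ∧
    (∃ b : ℤ → ℂ, (∀ j : ℤ, j ∉ Finset.Icc (-(N : ℤ)) (N : ℤ) → b j = 0) ∧
      toyM N b = 1 ∧ toyH N b = 3 / 4) := by
  constructor
  · intro b hb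
    set a : ℕ → ℝ := fun i => ‖b ((N:ℤ) - i)‖ ^ 2 with ha_def
    have ha : ∀ i, 0 ≤ a i := fun i => sq_nonneg _
    have hM : toyM N b = ∑ i ∈ range (2*N+1), a i := reindex_sum N _
    have hH : toyH N b ≤ ∑ i ∈ range (2*N+1), ((1/2) * (a i)^2 + 2 * (a i * a (i+1))) := by
      rw [toyH, reindex_sum N]
      apply Finset.sum_le_sum
      intro i _
      have hre : -(((starRingEnd ℂ) (b ((N:ℤ) - i)) ^ 2 * (b ((N:ℤ) - i - 1)) ^ 2).re)
          ≤ ‖b ((N:ℤ) - i)‖ ^ 2 * ‖b ((N:ℤ) - i - 1)‖ ^ 2 := by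
        calc -(((starRingEnd ℂ) (b ((N:ℤ) - i)) ^ 2 * (b ((N:ℤ) - i - 1)) ^ 2).re)
            ≤ ‖(starRingEnd ℂ) (b ((N:ℤ) - i)) ^ 2 * (b ((N:ℤ) - i - 1)) ^ 2‖ := by
              have h1 := Complex.abs_re_le_norm
                ((starRingEnd ℂ) (b ((N:ℤ) - i)) ^ 2 * (b ((N:ℤ) - i - 1)) ^ 2)
              have h2 := neg_abs_le
                (((starRingEnd ℂ) (b ((N:ℤ) - i)) ^ 2 * (b ((N:ℤ) - i - 1)) ^ 2).re)
              linarith [abs_nonneg (((starRingEnd ℂ) (b ((N:ℤ) - i)) ^ 2 * (b ((N:ℤ) - i - 1)) ^ 2).re)]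
          _ = ‖b ((N:ℤ) - i)‖ ^ 2 * ‖b ((N:ℤ) - i - 1)‖ ^ 2 := by
              rw [norm_mul, norm_pow, norm_pow, Complex.norm_conj]
      have hidx : (N:ℤ) - i - 1 = (N:ℤ) - (↑(i+1) : ℤ) := by push_cast; ring
      have h4 : ‖b ((N:ℤ) - i)‖ ^ 4 = (a i)^2 := by
        simp only [ha_def]; ring
      have ha1 : a (i+1) = ‖b ((N:ℤ) - i - 1)‖ ^ 2 := by
        simp only [ha_def, hidx]
      have hai : a i = ‖b ((N:ℤ) - i)‖ ^ 2 := rfl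
      rw [h4, ha1]
      rw [hai]
      linarith [hre]
    have hlast : a (2*N+1) = 0 := by
      have : b ((N:ℤ) - (↑(2*N+1) : ℤ)) = 0 := by
        apply hb
        simp only [mem_Icc]
        push_cast
        omega
      simp only [ha_def, this, norm_zero]
      norm_num
    have hsplit : ∑ i ∈ range (2*N+1), a i * a (i+1)
        = ∑ i ∈ range (2*N), a i * a (i+1) + a (2*N) * a (2*N+1) :=
      Finset.sum_range_succ _ (2*N)
    have hkey := key_ineq (2*N+1) a ha
    have h2N : (2*N+1) - 1 = 2*N := by omega
    rw [h2N] at hkey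
    rw [hM]
    calc toyH N b ≤ ∑ i ∈ range (2*N+1), ((1/2) * (a i)^2 + 2 * (a i * a (i+1))) := hH
      _ = (1/2) * ∑ i ∈ range (2*N+1), (a i)^2
            + 2 * ∑ i ∈ range (2*N+1), a i * a (i+1) := by
          rw [Finset.sum_add_distrib, Finset.mul_sum, Finset.mul_sum]
      _ = (1/2) * ∑ i ∈ range (2*N+1), (a i)^2
            + 2 * ∑ i ∈ range (2*N), a i * a (i+1) := by
          rw [hsplit, hlast]; ring
      _ ≤ (3/4) * (∑ i ∈ range (2*N+1), a i)^2 := hkey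
  ·
    set x : ℝ := (Real.sqrt 2)⁻¹ with hxdef
    have hx2 : x^2 = 1/2 := by
      rw [hxdef, inv_pow, Real.sq_sqrt (by norm_num : (0:ℝ) ≤ 2)]
      norm_num
    have hxnn : 0 ≤ x := by positivity
    set c : ℤ → ℂ := fun j => if j = 0 then (x : ℂ)
        else if j = 1 then Complex.I * (x : ℂ) else 0 with hcdef
    have hc0 : c 0 = (x:ℂ) := by simp [hcdef]
    have hc1 : c 1 = Complex.I * (x:ℂ) := by simp [hcdef]
    have hcother : ∀ j : ℤ, j ≠ 0 → j ≠ 1 → c j = 0 := by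
      intro j h0 h1; simp [hcdef, h0, h1]
    have hN1 : (1:ℤ) ≤ (N:ℤ) := by exact_mod_cast hN
    have hsub : ({0, 1} : Finset ℤ) ⊆ Finset.Icc (-(N:ℤ)) N := by
      intro j hj
      simp only [mem_insert, mem_singleton] at hj
      simp only [mem_Icc]
      rcases hj with h | h <;> omega
    have habs0 : ‖c 0‖ ^ 2 = 1/2 := by
      rw [hc0, Complex.norm_real, Real.norm_eq_abs, abs_of_nonneg hxnn, hx2]
    have habs1 : ‖c 1‖ ^ 2 = 1/2 := by
      rw [hc1, norm_mul, Complex.norm_I, one_mul, Complex.norm_real, Real.norm_eq_abs, abs_of_nonneg hxnn, hx2]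
    refine ⟨c, ?_, ?_, ?_⟩
    · intro j hj
      simp only [mem_Icc, not_and_or, not_le] at hj
      apply hcother <;> rcases hj with h | h <;> omega
    · rw [toyM, ← Finset.sum_subset hsub (by
        intro j _ hj
        simp only [mem_insert, mem_singleton, not_or] at hj
        rw [hcother j hj.1 hj.2]
        simp)]
      rw [Finset.sum_pair (by norm_num : (0:ℤ) ≠ 1), habs0, habs1]
      norm_num
    · rw [toyH, ← Finset.sum_subset hsub (by
        intro j _ hj
        simp only [mem_insert, mem_singleton, not_or] at hj
        rw [hcother j hj.1 hj.2]
        simp)]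
      rw [Finset.sum_pair (by norm_num : (0:ℤ) ≠ 1)]
      have hcm1 : c (0 - 1) = 0 := hcother _ (by norm_num) (by norm_num)
      have e0 : (1/2) * ‖c 0‖ ^ 4
          - 2 * ((((starRingEnd ℂ) (c 0)) ^ 2 * (c (0 - 1)) ^ 2).re) = 1/8 := by
        rw [hcm1]
        have : ‖c 0‖ ^ 4 = (‖c 0‖ ^ 2)^2 := by ring
        rw [this, habs0]
        norm_num
      have e1 : (1/2) * ‖c 1‖ ^ 4
          - 2 * ((((starRingEnd ℂ) (c 1)) ^ 2 * (c (1 - 1)) ^ 2).re) = 5/8 := by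
        have h11 : (1:ℤ) - 1 = 0 := by norm_num
        have habs4 : ‖c 1‖ ^ 4 = 1/4 := by
          have h : ‖c 1‖ ^ 4 = (‖c 1‖ ^ 2)^2 := by ring
          rw [h, habs1]; norm_num
        have hprod : ((starRingEnd ℂ) (c 1)) ^ 2 * (c 0) ^ 2
            = ((-(x^4) : ℝ) : ℂ) := by
          rw [hc0, hc1, map_mul, Complex.conj_I, Complex.conj_ofReal]
          push_cast
          ring_nf
          rw [Complex.I_sq]
          ring
        rw [h11, hprod, habs4, Complex.ofReal_re]
        have h4 : x^4 = (x^2)^2 := by ring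
        rw [h4, hx2]
        norm_num
      rw [e0, e1]
      norm_num
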